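/- Suppose 0 < Z_SD < Z_SR and Z_RD > 0, S > 0, and fix t1, t2 > 0 with t1 + t2 = 1 satisfying t2·C(Z_RD·S/(1 + Z_SD·S)) ≤ t1·C(Z_SR·S). Then the supremum of x1 + x2 + x3 over all feasible tuples (α, x1, x2, x3) (with these fixed slot lengths t1, t2) equals t1·log( (1 + Z_SD·S) / ( 1 + (Z_SD/Z_SR)·[ (1 + Z_RD·S/(1 + Z_SD·S))^{t2/t1} − 1 ] ) ) + t2·C((Z_SD + Z_RD)·S). -/

import Mathlib

open Real

/-- Shannon-type capacity function `C(x) = log (1 + x)` (natural logarithm). -/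
noncomputable def capC (x : ℝ) : ℝ := Real.log (1 + x)

/-- Feasibility of a tuple `(t1, t2, α, x1, x2, x3)` for the three-node
flow optimization problem with link gains `ZSD, ZSR, ZRD` and transmit SNR `S`. -/
def Feasible (ZSD ZSR ZRD S t1 t2 α x1 x2 x3 : ℝ) : Prop :=
  0 ≤ t1 ∧ 0 ≤ t2 ∧ t1 + t2 = 1 ∧ 0 ≤ α ∧ α ≤ 1 ∧
  0 ≤ x1 ∧ 0 ≤ x2 ∧ 0 ≤ x3 ∧
  x2 ≤ t2 * capC (ZRD * S) ∧
  x3 ≤ t2 * capC (ZSD * S) ∧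
  x2 + x3 ≤ t2 * capC ((ZSD + ZRD) * S) ∧
  (ZSR ≤ ZSD →
    x1 ≤ t1 * capC (ZSD * α * S) ∧
    x2 ≤ t1 * capC (ZSR * (1 - α) * S / (1 + ZSR * α * S))) ∧
  (ZSD < ZSR →
    x1 ≤ t1 * capC (ZSD * α * S / (1 + ZSD * (1 - α) * S)) ∧
    x2 ≤ t1 * capC (ZSR * (1 - α) * S))

set_option maxHeartbeats 1000000 in
/-- When `0 < Z_SD < Z_SR`, for fixed slot lengths `t1, t2 > 0`
with `t1 + t2 = 1` and `t2·C(Z_RD·S/(1+Z_SD·S)) ≤ t1·C(Z_SR·S)`, the maximum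
achievable rate (over `α, x1, x2, x3`) equals
`t1·log((1+Z_SD·S)/(1+(Z_SD/Z_SR)·[(1+Z_RD·S/(1+Z_SD·S))^(t2/t1) − 1]))
  + t2·C((Z_SD+Z_RD)·S)`. -/
theorem sup_rate_fixed_slots_small_t2
    (ZSD ZSR ZRD S t1 t2 : ℝ) (hZSD : 0 < ZSD) (hZ : ZSD < ZSR) (hZRD : 0 < ZRD)
    (hS : 0 < S) (ht1 : 0 < t1) (ht2 : 0 < t2) (ht : t1 + t2 = 1)
    (hcase : t2 * capC (ZRD * S / (1 + ZSD * S)) ≤ t1 * capC (ZSR * S)) :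
    sSup {x : ℝ | ∃ α x1 x2 x3 : ℝ,
        Feasible ZSD ZSR ZRD S t1 t2 α x1 x2 x3 ∧ x = x1 + x2 + x3}
      = t1 * Real.log ((1 + ZSD * S) /
          (1 + (ZSD / ZSR) *
            ((1 + ZRD * S / (1 + ZSD * S)) ^ (t2 / t1) - 1)))
        + t2 * capC ((ZSD + ZRD) * S) := by
  have hZSR : 0 < ZSR := hZSD.trans hZ
  simp only [capC] at hcase
  -- basic quantities
  set A : ℝ := 1 + ZSD * S with hAdef
  have hA1 : 1 ≤ A := by rw [hAdef]; linarith [mul_pos hZSD hS]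
  have hA : 0 < A := by linarith
  set b : ℝ := 1 + ZRD * S / A with hbdef
  have hbgt : 1 < b := by
    have : 0 < ZRD * S / A := div_pos (mul_pos hZRD hS) hA
    simp only [hbdef]; linarith
  have hb0 : 0 < b := by linarith
  set P : ℝ := b ^ (t2 / t1) with hPdef
  have hP1 : 1 < P := by
    rw [hPdef]
    exact (Real.one_lt_rpow_iff_of_pos hb0).mpr (Or.inl ⟨hbgt, div_pos ht2 ht1⟩)
  have hlogP : Real.log P = (t2 / t1) * Real.log b := Real.log_rpow hb0 _
  have ht1logP : t1 * Real.log P = t2 * Real.log b := by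
    rw [hlogP]; field_simp
  -- P ≤ 1 + ZSR * S
  have hPle : P ≤ 1 + ZSR * S := by
    have h1 : t1 * Real.log P ≤ t1 * Real.log (1 + ZSR * S) := by
      rw [ht1logP]; exact hcase
    have h2 : Real.log P ≤ Real.log (1 + ZSR * S) :=
      le_of_mul_le_mul_left h1 ht1
    exact (Real.log_le_log_iff (by linarith) (by linarith [mul_pos hZSR hS])).mp h2
  -- the critical point
  set w : ℝ := (P - 1) / ZSR with hwdef
  have hw0 : 0 < w := div_pos (by linarith) hZSR
  have hwS : w ≤ S := by
    rw [hwdef, div_le_iff₀ hZSR]; linarith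
  have hPw : 1 + ZSR * w = P := by
    rw [hwdef]; field_simp; ring
  have hDgoal : 1 + ZSD / ZSR * (P - 1) = 1 + ZSD * w := by
    rw [hwdef]; ring
  rw [hDgoal]
  set D : ℝ := 1 + ZSD * w with hDdef
  have hDpos : 0 < D := by rw [hDdef]; linarith [mul_pos hZSD hw0]
  have hDA : D ≤ A := by rw [hDdef, hAdef]; linarith [mul_le_mul_of_nonneg_left hwS hZSD.le]
  have hbA : b * A = 1 + (ZSD + ZRD) * S := by
    rw [hbdef]; field_simp; ring
  have hM : capC ((ZSD + ZRD) * S) = Real.log b + Real.log A := by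
    rw [capC, ← Real.log_mul (ne_of_gt hb0) (ne_of_gt hA), hbA]
  have hlogAD : Real.log (A / D) = Real.log A - Real.log D :=
    Real.log_div (ne_of_gt hA) (ne_of_gt hDpos)
  clear_value A b P w D
  -- cross inequality
  have hkey : ∀ p q : ℝ, 0 ≤ p → p ≤ q →
      Real.log (1 + ZSR * p) + Real.log (1 + ZSD * q) ≤
      Real.log (1 + ZSR * q) + Real.log (1 + ZSD * p) := by
    intro p q hp hpq
    have h1 : 0 < 1 + ZSR * p := by linarith [mul_nonneg hZSR.le hp]
    have h2 : 0 < 1 + ZSD * q := by linarith [mul_nonneg hZSD.le (hp.trans hpq)]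
    have h3 : 0 < 1 + ZSR * q := by linarith [mul_nonneg hZSR.le (hp.trans hpq)]
    have h4 : 0 < 1 + ZSD * p := by linarith [mul_nonneg hZSD.le hp]
    rw [← Real.log_mul (ne_of_gt h1) (ne_of_gt h2),
        ← Real.log_mul (ne_of_gt h3) (ne_of_gt h4)]
    apply Real.log_le_log (mul_pos h1 h2)
    linarith [mul_nonneg (sub_nonneg.mpr hZ.le) (sub_nonneg.mpr hpq)]
  -- the optimal value
  set V : ℝ := t1 * Real.log (A / D) + t2 * capC ((ZSD + ZRD) * S) with hVdef
  clear_value V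
  -- upper bound
  have hub : ∀ y ∈ {x : ℝ | ∃ α x1 x2 x3 : ℝ,
      Feasible ZSD ZSR ZRD S t1 t2 α x1 x2 x3 ∧ x = x1 + x2 + x3}, y ≤ V := by
    rintro y ⟨α, x1, x2, x3, hF, rfl⟩
    obtain ⟨-, -, -, hα0, hα1, hx1n, hx2n, hx3n, hx2RD, hx3, hx23, -, hBC⟩ := hF
    obtain ⟨hx1b, hx2b⟩ := hBC hZ
    set u : ℝ := (1 - α) * S with hudef
    clear_value u
    have hu0 : 0 ≤ u := by
      rw [hudef]; exact mul_nonneg (by linarith) hS.le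
    have huS : u ≤ S := by
      rw [hudef]; linarith [mul_nonneg hα0 hS.le]
    have hDu : 0 < 1 + ZSD * u := by
      linarith [mul_nonneg hZSD.le hu0]
    have hαS : α * S = S - u := by rw [hudef]; ring
    have hcapx1 : capC (ZSD * α * S / (1 + ZSD * (1 - α) * S))
        = Real.log (A / (1 + ZSD * u)) := by
      rw [capC]
      congr 1
      have e1 : ZSD * (1 - α) * S = ZSD * u := by rw [hudef]; ring
      have e2 : ZSD * α * S = ZSD * S - ZSD * u := by
        rw [mul_assoc, hαS]; ring
      rw [e1, e2, hAdef]
      field_simp; ring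
    rw [hcapx1] at hx1b
    have hcapx2 : capC (ZSR * (1 - α) * S) = Real.log (1 + ZSR * u) := by
      rw [capC]; congr 2; rw [hudef]; ring
    rw [hcapx2] at hx2b
    have hx3' : x3 ≤ t2 * Real.log A := by
      simpa only [capC, ← hAdef] using hx3
    have hlogdiv : Real.log (A / (1 + ZSD * u))
        = Real.log A - Real.log (1 + ZSD * u) :=
      Real.log_div (ne_of_gt hA) (ne_of_gt hDu)
    rw [hVdef, hM, hlogAD]
    rcases le_total u w with hc | hc
    · -- small u : use x1, x2, x3 bounds separately
      have h1 := hkey u w hu0 hc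
      rw [hPw, ← hDdef] at h1
      have h1t := mul_le_mul_of_nonneg_left h1 ht1.le
      rw [hlogdiv] at hx1b
      linarith [ht1logP]
    · -- large u : use monotonicity of A/(1+ZSD u) and the MAC sum bound
      have hx23' : x2 + x3 ≤ t2 * (Real.log b + Real.log A) := by
        rw [← hM]; exact hx23
      have hmono : Real.log (A / (1 + ZSD * u)) ≤ Real.log (A / D) := by
        apply Real.log_le_log (div_pos hA hDu)
        apply div_le_div_of_nonneg_left hA.le hDpos
        rw [hDdef]; linarith [mul_le_mul_of_nonneg_left hc hZSD.le]
      have hx1' : x1 ≤ t1 * (Real.log A - Real.log D) := by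
        rw [← hlogAD]
        calc x1 ≤ t1 * Real.log (A / (1 + ZSD * u)) := hx1b
          _ ≤ t1 * Real.log (A / D) := mul_le_mul_of_nonneg_left hmono ht1.le
      linarith
  -- membership of V
  have hmem : V ∈ {x : ℝ | ∃ α x1 x2 x3 : ℝ,
      Feasible ZSD ZSR ZRD S t1 t2 α x1 x2 x3 ∧ x = x1 + x2 + x3} := by
    refine ⟨1 - w / S, t1 * Real.log (A / D), t2 * Real.log b, t2 * Real.log A,
      ⟨ht1.le, ht2.le, ht, ?_, ?_, ?_, ?_, ?_, ?_, ?_, ?_, ?_, ?_⟩, ?_⟩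
    · -- 0 ≤ α
      have : w / S ≤ 1 := (div_le_one hS).mpr hwS
      linarith
    · -- α ≤ 1
      have : 0 ≤ w / S := le_of_lt (div_pos hw0 hS)
      linarith
    · -- 0 ≤ x1
      apply mul_nonneg ht1.le
      apply Real.log_nonneg
      rw [le_div_iff₀ hDpos]; linarith
    · exact mul_nonneg ht2.le (Real.log_nonneg (by linarith))
    · exact mul_nonneg ht2.le (Real.log_nonneg hA1)
    · -- x2 ≤ t2 * capC (ZRD * S)
      apply mul_le_mul_of_nonneg_left _ ht2.le
      rw [capC]
      apply Real.log_le_log hb0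
      rw [hbdef]
      have : ZRD * S / A ≤ ZRD * S := div_le_self (mul_pos hZRD hS).le hA1
      linarith
    · -- x3 ≤ t2 * capC (ZSD * S)
      simp only [capC, ← hAdef]; exact le_refl _
    · -- x2 + x3 ≤ t2 * capC ((ZSD+ZRD)*S)
      exact le_of_eq (by rw [hM]; ring)
    · intro h; exact absurd h (not_le.mpr hZ)
    · intro _
      have hα : (1 : ℝ) - (1 - w / S) = w / S := by ring
      have hsub : (1 - (1 - w / S)) * S = w := by
        rw [hα]; field_simp
      constructor
      · -- x1 bound: equality
        have hcap1 : capC (ZSD * (1 - w / S) * S / (1 + ZSD * (1 - (1 - w / S)) * S))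
            = Real.log (A / D) := by
          rw [capC]
          congr 1
          have e1 : ZSD * (1 - (1 - w / S)) * S = ZSD * w := by
            rw [mul_assoc, hsub]
          have e2 : ZSD * (1 - w / S) * S = ZSD * S - ZSD * w := by
            field_simp
          rw [e1, e2, hAdef, hDdef]
          field_simp; ring
        rw [hcap1]
      · -- x2 bound: equality
        have hcap2 : capC (ZSR * (1 - (1 - w / S)) * S) = Real.log P := by
          rw [capC, ← hPw]
          congr 2
          rw [mul_assoc, hsub]
        rw [hcap2, ht1logP]
    · rw [hVdef, hM]; ring
  -- conclude
  exact le_antisymm (csSup_le ⟨V, hmem⟩ hub) (le_csSup ⟨V, hub⟩ hmem)
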